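/- (Two-value reduction lemma, key step of Theorem 5.) Fix an integer D ≥ 1 and reals ᾱ, β̄, π₁, π₂, α₁, α₂, β₁, β₂ ≥ 0. For every probability vector p on Fin D there exists a probability vector q on Fin D whose range {q i : i ∈ Fin D} has at most two elements, such that ∑_{i ∈ Fin D} φ(ᾱ·q i + β̄/D) ≥ ∑_{i ∈ Fin D} φ(ᾱ·p i + β̄/D) and ∑_{i ∈ Fin D} min(f₁(q i), f₂(q i)) ≤ ∑_{i ∈ Fin D} min(f₁(p i), f₂(p i)). -/

import Mathlib

/-- `φ(x) = -x·log₂ x`, with the convention `0·log₂ 0 = 0`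
(note `Real.logb 2 0 = 0` in Mathlib, so this convention holds definitionally). -/
noncomputable def phi (x : ℝ) : ℝ := -x * Real.logb 2 x

/-- `f_s(x) = π_s·α_s·x + π_s·β_s/D` for a channel state `s`. -/
noncomputable def f (D : ℕ) (pis alphas betas : ℝ) (x : ℝ) : ℝ :=
  pis * alphas * x + pis * betas / D

lemma phi_eq (x : ℝ) : phi x = (Real.log 2)⁻¹ * Real.negMulLog x := by
  unfold phi Real.negMulLog Real.logb
  ring

lemma concaveOn_phi : ConcaveOn ℝ (Set.Ici (0:ℝ)) phi := by
  have h := Real.concaveOn_negMulLog.smul (c := (Real.log 2)⁻¹)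
    (by positivity)
  have e : phi = fun x => (Real.log 2)⁻¹ • Real.negMulLog x := by
    funext x
    simp [phi_eq, smul_eq_mul]
  rw [e]
  exact h

lemma concaveOn_comp (abar c : ℝ) (ha : 0 ≤ abar) (hc : 0 ≤ c) :
    ConcaveOn ℝ (Set.Ici (0:ℝ)) (fun x => phi (abar * x + c)) := by
  refine ⟨convex_Ici 0, fun x hx y hy a b haa hbb hab => ?_⟩
  have hx' : abar * x + c ∈ Set.Ici (0:ℝ) := add_nonneg (mul_nonneg ha hx) hc
  have hy' : abar * y + c ∈ Set.Ici (0:ℝ) := add_nonneg (mul_nonneg ha hy) hc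
  have h := concaveOn_phi.2 hx' hy' haa hbb hab
  simp only [smul_eq_mul] at h ⊢
  have e : a * (abar * x + c) + b * (abar * y + c) = abar * (a * x + b * y) + c := by
    linear_combination c * hab
  rw [e] at h
  exact h

/-- Jensen for one part. -/
lemma jensen_phi {D : ℕ} (abar c : ℝ) (ha : 0 ≤ abar) (hc : 0 ≤ c)
    (U : Finset (Fin D)) (p : Fin D → ℝ) (hp : ∀ i, 0 ≤ p i) :
    ∑ i ∈ U, phi (abar * p i + c) ≤
      (U.card : ℝ) * phi (abar * ((∑ i ∈ U, p i) / U.card) + c) := by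
  rcases eq_or_ne U.card 0 with h0 | h0
  · obtain rfl : U = ∅ := Finset.card_eq_zero.mp h0
    simp
  have hn : (0:ℝ) < (U.card : ℝ) := by positivity
  have key := (concaveOn_comp abar c ha hc).le_map_sum
    (t := U) (w := fun _ => (U.card : ℝ)⁻¹) (p := p)
    (fun i _ => by positivity)
    (by simp [Finset.sum_const, nsmul_eq_mul]; field_simp)
    (fun i _ => hp i)
  simp only [smul_eq_mul, ← Finset.mul_sum] at key
  have e : (U.card : ℝ)⁻¹ * ∑ i ∈ U, p i = (∑ i ∈ U, p i) / U.card := by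
    rw [div_eq_inv_mul]
  rw [e] at key
  calc ∑ i ∈ U, phi (abar * p i + c)
      = (U.card : ℝ) * ((U.card:ℝ)⁻¹ * ∑ i ∈ U, phi (abar * p i + c)) := by
        field_simp
    _ ≤ (U.card : ℝ) * phi (abar * ((∑ i ∈ U, p i) / U.card) + c) := by
        apply mul_le_mul_of_nonneg_left key hn.le

/-- linearity for one part. -/
lemma lin_part {D : ℕ} (pis as bs : ℝ) (U : Finset (Fin D)) (p : Fin D → ℝ) :
    (U.card : ℝ) * f D pis as bs ((∑ i ∈ U, p i) / U.card) =
      ∑ i ∈ U, f D pis as bs (p i) := by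
  rcases eq_or_ne U.card 0 with h0 | h0
  · obtain rfl : U = ∅ := Finset.card_eq_zero.mp h0
    simp
  have hn : (U.card : ℝ) ≠ 0 := Nat.cast_ne_zero.mpr h0
  simp only [f, Finset.sum_add_distrib, ← Finset.mul_sum, Finset.sum_const, nsmul_eq_mul]
  field_simp

lemma card_mul_avg {D : ℕ} (U : Finset (Fin D)) (p : Fin D → ℝ) :
    (U.card : ℝ) * ((∑ i ∈ U, p i) / U.card) = ∑ i ∈ U, p i := by
  rcases eq_or_ne U.card 0 with h0 | h0
  · obtain rfl : U = ∅ := Finset.card_eq_zero.mp h0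
    simp
  have hn : (U.card : ℝ) ≠ 0 := Nat.cast_ne_zero.mpr h0
  field_simp

/-- Two-value reduction lemma: for every probability vector `p` on `Fin D` there is a
probability vector `q` taking at most two distinct values such that the rate sum does
not decrease and the detection sum does not increase. -/
theorem stmt_10 (D : ℕ) (hD : 1 ≤ D)
    (abar bbar pi1 pi2 alpha1 alpha2 beta1 beta2 : ℝ)
    (ha : 0 ≤ abar) (hb : 0 ≤ bbar)
    (hpi1 : 0 ≤ pi1) (hpi2 : 0 ≤ pi2) (halpha1 : 0 ≤ alpha1) (halpha2 : 0 ≤ alpha2)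
    (hbeta1 : 0 ≤ beta1) (hbeta2 : 0 ≤ beta2)
    (p : Fin D → ℝ) (hp : ∀ i, 0 ≤ p i) (hsum : ∑ i, p i = 1) :
    ∃ q : Fin D → ℝ, (∀ i, 0 ≤ q i) ∧ (∑ i, q i = 1) ∧
      (∃ v w : ℝ, ∀ i, q i = v ∨ q i = w) ∧
      (∑ i, phi (abar * q i + bbar / D)) ≥ (∑ i, phi (abar * p i + bbar / D)) ∧
      (∑ i, min (f D pi1 alpha1 beta1 (q i)) (f D pi2 alpha2 beta2 (q i))) ≤
        (∑ i, min (f D pi1 alpha1 beta1 (p i)) (f D pi2 alpha2 beta2 (p i))) := by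
  have hDpos : (0:ℝ) < D := by exact_mod_cast hD
  have hc : 0 ≤ bbar / D := div_nonneg hb hDpos.le
  set S : Finset (Fin D) :=
    Finset.univ.filter (fun i => f D pi1 alpha1 beta1 (p i) ≤ f D pi2 alpha2 beta2 (p i))
    with hS
  set a : ℝ := (∑ i ∈ S, p i) / S.card with haa
  set b : ℝ := (∑ i ∈ Sᶜ, p i) / Sᶜ.card with hbb
  refine ⟨fun i => if i ∈ S then a else b, ?_, ?_, ⟨a, b, fun i => ?_⟩, ?_, ?_⟩
  · intro i
    dsimp only
    split
    · exact div_nonneg (Finset.sum_nonneg fun j _ => hp j) (Nat.cast_nonneg _)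
    · exact div_nonneg (Finset.sum_nonneg fun j _ => hp j) (Nat.cast_nonneg _)
  · rw [← Finset.sum_add_sum_compl S]
    have h1 : ∑ i ∈ S, (if i ∈ S then a else b) = ∑ i ∈ S, p i := by
      rw [Finset.sum_congr rfl (fun i hi => if_pos hi), Finset.sum_const, nsmul_eq_mul,
        card_mul_avg]
    have h2 : ∑ i ∈ Sᶜ, (if i ∈ S then a else b) = ∑ i ∈ Sᶜ, p i := by
      rw [Finset.sum_congr rfl (fun i hi => if_neg (Finset.mem_compl.mp hi)),
        Finset.sum_const, nsmul_eq_mul, card_mul_avg]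
    rw [h1, h2, Finset.sum_add_sum_compl, hsum]
  · dsimp only; split <;> simp
  · -- rate inequality
    rw [ge_iff_le, ← Finset.sum_add_sum_compl S (f := fun i => phi (abar * p i + bbar / D)),
      ← Finset.sum_add_sum_compl S
        (f := fun i => phi (abar * (if i ∈ S then a else b) + bbar / D))]
    have h1 : ∑ i ∈ S, phi (abar * (if i ∈ S then a else b) + bbar / D)
        = (S.card : ℝ) * phi (abar * a + bbar / D) := by
      rw [Finset.sum_congr rfl (fun i hi => by rw [if_pos hi]), Finset.sum_const,
        nsmul_eq_mul]
    have h2 : ∑ i ∈ Sᶜ, phi (abar * (if i ∈ S then a else b) + bbar / D)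
        = (Sᶜ.card : ℝ) * phi (abar * b + bbar / D) := by
      rw [Finset.sum_congr rfl (fun i hi => by rw [if_neg (Finset.mem_compl.mp hi)]),
        Finset.sum_const, nsmul_eq_mul]
    rw [h1, h2]
    exact add_le_add (jensen_phi abar (bbar / D) ha hc S p hp)
      (jensen_phi abar (bbar / D) ha hc Sᶜ p hp)
  · -- detection inequality
    rw [← Finset.sum_add_sum_compl S (f := fun i =>
        min (f D pi1 alpha1 beta1 (p i)) (f D pi2 alpha2 beta2 (p i))),
      ← Finset.sum_add_sum_compl S (f := fun i =>
        min (f D pi1 alpha1 beta1 (if i ∈ S then a else b))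
            (f D pi2 alpha2 beta2 (if i ∈ S then a else b)))]
    have h1 : ∑ i ∈ S, min (f D pi1 alpha1 beta1 (if i ∈ S then a else b))
          (f D pi2 alpha2 beta2 (if i ∈ S then a else b))
        ≤ ∑ i ∈ S, min (f D pi1 alpha1 beta1 (p i)) (f D pi2 alpha2 beta2 (p i)) := by
      calc ∑ i ∈ S, min (f D pi1 alpha1 beta1 (if i ∈ S then a else b))
              (f D pi2 alpha2 beta2 (if i ∈ S then a else b))
          = (S.card : ℝ) * min (f D pi1 alpha1 beta1 a) (f D pi2 alpha2 beta2 a) := by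
            rw [Finset.sum_congr rfl (fun i hi => by rw [if_pos hi]),
              Finset.sum_const, nsmul_eq_mul]
        _ ≤ (S.card : ℝ) * f D pi1 alpha1 beta1 a :=
            mul_le_mul_of_nonneg_left (min_le_left _ _) (Nat.cast_nonneg _)
        _ = ∑ i ∈ S, f D pi1 alpha1 beta1 (p i) := lin_part _ _ _ _ _
        _ = ∑ i ∈ S, min (f D pi1 alpha1 beta1 (p i)) (f D pi2 alpha2 beta2 (p i)) := by
            refine Finset.sum_congr rfl fun i hi => ?_
            rw [min_eq_left (Finset.mem_filter.mp hi).2]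
    have h2 : ∑ i ∈ Sᶜ, min (f D pi1 alpha1 beta1 (if i ∈ S then a else b))
          (f D pi2 alpha2 beta2 (if i ∈ S then a else b))
        ≤ ∑ i ∈ Sᶜ, min (f D pi1 alpha1 beta1 (p i)) (f D pi2 alpha2 beta2 (p i)) := by
      calc ∑ i ∈ Sᶜ, min (f D pi1 alpha1 beta1 (if i ∈ S then a else b))
              (f D pi2 alpha2 beta2 (if i ∈ S then a else b))
          = (Sᶜ.card : ℝ) * min (f D pi1 alpha1 beta1 b) (f D pi2 alpha2 beta2 b) := by
            rw [Finset.sum_congr rfl (fun i hi => by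
              rw [if_neg (Finset.mem_compl.mp hi)]),
              Finset.sum_const, nsmul_eq_mul]
        _ ≤ (Sᶜ.card : ℝ) * f D pi2 alpha2 beta2 b :=
            mul_le_mul_of_nonneg_left (min_le_right _ _) (Nat.cast_nonneg _)
        _ = ∑ i ∈ Sᶜ, f D pi2 alpha2 beta2 (p i) := lin_part _ _ _ _ _
        _ = ∑ i ∈ Sᶜ, min (f D pi1 alpha1 beta1 (p i)) (f D pi2 alpha2 beta2 (p i)) := by
            refine Finset.sum_congr rfl fun i hi => ?_
            have : ¬ f D pi1 alpha1 beta1 (p i) ≤ f D pi2 alpha2 beta2 (p i) := by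
              have := Finset.mem_compl.mp hi
              simpa [hS] using this
            rw [min_eq_right (le_of_lt (not_le.mp this))]
    exact add_le_add h1 h2
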